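/- arXiv:1611.08370 — 2 statements merged into one kernel-verified Lean document; each statement's English description precedes it below -/
import Mathlib

section
/- For every integer n ≥ 2, every q ∈ ℂ with q ≠ 0, and every s ∈ ℂ, (1 − qs) · det(I_n − s · B_1 B_2 ⋯ B_{n−1}) = (1 − s)(1 − (qs)^n). In particular the eigenvalues of the Burau matrix β_{n,q}(σ_1σ_2⋯σ_{n−1}) are 1 and qξ_n^j for j = 1, …, n−1, where ξ_n = e^{2πi/n}. -/
open Matrix

/-- The (unreduced) Burau matrix `B_{i+1} = I_i ⊕ [[1−q, 1], [q, 0]] ⊕ I_{n-i-2}`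
(the 2×2 block sits in rows/columns `i`, `i+1`, zero-based). -/
noncomputable def burauMatrix (n : ℕ) (q : ℂ) (i : Fin (n - 1)) :
    Matrix (Fin n) (Fin n) ℂ := fun j k =>
  if (j : ℕ) = i ∧ (k : ℕ) = i then 1 - q
  else if (j : ℕ) = i ∧ (k : ℕ) = (i : ℕ) + 1 then 1
  else if (j : ℕ) = (i : ℕ) + 1 ∧ (k : ℕ) = i then q
  else if (j : ℕ) = (i : ℕ) + 1 ∧ (k : ℕ) = (i : ℕ) + 1 then 0
  else if j = k then 1 else 0

/-- The reduced Burau matrix `B^r_{i+1}` (zero-based generator index `i`): it agrees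
with the identity except in row `i`, where the entries at columns `i−1, i, i+1`
are `q, −q, 1` respectively. -/
noncomputable def rBurauMatrix (n : ℕ) (q : ℂ) (i : Fin (n - 1)) :
    Matrix (Fin (n - 1)) (Fin (n - 1)) ℂ := fun j k =>
  if (j : ℕ) = i then
    if (k : ℕ) + 1 = i then q
    else if (k : ℕ) = i then -q
    else if (k : ℕ) = (i : ℕ) + 1 then 1
    else 0
  else if j = k then 1 else 0


/-- The Burau image `B_1 B_2 ⋯ B_{n−1}` of the braid `σ_1 σ_2 ⋯ σ_{n−1}`. -/
noncomputable def burauProd (n : ℕ) (q : ℂ) : Matrix (Fin n) (Fin n) ℂ :=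
  ((List.finRange (n - 1)).map (burauMatrix n q)).prod

noncomputable def Pmat (m : ℕ) (q : ℂ) : Matrix (Fin m) (Fin m) ℂ := fun j k =>
  if (j : ℕ) = 0 then (if (k : ℕ) + 1 = m then 1 else 1 - q)
  else if (k : ℕ) + 1 = (j : ℕ) then q else 0

noncomputable def Amat (m : ℕ) (q s : ℂ) : Matrix (Fin m) (Fin m) ℂ := fun j k =>
  (if (j : ℕ) = (k : ℕ) then 1 else 0) - s * Pmat m q j k

noncomputable def Amat' (m : ℕ) (q s : ℂ) : Matrix (Fin m) (Fin m) ℂ := fun j k =>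
  if (j : ℕ) = 0 then -(s * Pmat m q j k) else Amat m q s j k

lemma det_lower_one {m : ℕ} (M : Matrix (Fin m) (Fin m) ℂ)
    (h : ∀ j k : Fin m, (j : ℕ) < (k : ℕ) → M j k = 0)
    (hd : ∀ j, M j j = 1) : M.det = 1 := by
  rw [Matrix.det_of_lowerTriangular M (fun i j hij => h i j hij)]
  simp [hd]

lemma det_Amat'_eq (m : ℕ) (q s : ℂ) :
    (Amat' (m + 1) q s).det = (Amat (m + 1) q s).det - 1 := by
  have hA : Amat (m + 1) q s
      = Matrix.updateRow (Amat' (m + 1) q s) 0 ((Amat' (m+1) q s 0) + Pi.single 0 1) := by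
    funext j k
    rcases eq_or_ne j 0 with rfl | hj
    · simp only [Matrix.updateRow_self, Pi.add_apply, Amat', Amat, Pmat, Fin.val_zero,
        Pi.single_apply, Fin.ext_iff, if_pos rfl]
      split_ifs <;> first | ring1 | omega | (exfalso; omega) | exact ‹False›.elim | grind
    · rw [Matrix.updateRow_ne hj]
      have hj' : (j : ℕ) ≠ 0 := by exact fun h => hj (Fin.ext h)
      simp only [Amat', if_neg hj']
  have h1 : (Matrix.updateRow (Amat' (m+1) q s) 0 (Pi.single 0 1)).det = 1 := by
    apply det_lower_one
    · intro j k hjk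
      rcases eq_or_ne j 0 with rfl | hj
      · rw [Matrix.updateRow_self]
        simp only [Pi.single_apply, Fin.ext_iff, Fin.val_zero]
        split_ifs <;> first | rfl | omega | (exfalso; omega) | exact ‹False›.elim
      · rw [Matrix.updateRow_ne hj]
        have hj' : (j : ℕ) ≠ 0 := by exact fun h => hj (Fin.ext h)
        simp only [Amat', Amat, Pmat, if_neg hj']
        split_ifs <;> first | ring1 | omega | (exfalso; omega) | exact ‹False›.elim
    · intro j
      rcases eq_or_ne j 0 with rfl | hj
      · simp [Pi.single_apply]
      · rw [Matrix.updateRow_ne hj]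
        have hj' : (j : ℕ) ≠ 0 := by exact fun h => hj (Fin.ext h)
        simp only [Amat', Amat, Pmat, if_neg hj']
        split_ifs <;> first | ring1 | omega | (exfalso; omega) | exact ‹False›.elim
  rw [hA, Matrix.det_updateRow_add, Matrix.updateRow_eq_self, h1]
  ring

lemma det_Amat_rec (m : ℕ) (q s : ℂ) :
    (Amat (m + 2) q s).det = (1 - s * (1 - q)) + q * s * (Amat' (m + 1) q s).det := by
  have h00 : Amat (m + 2) q s 0 0 = 1 - s * (1 - q) := by
    simp only [Amat, Pmat, Fin.val_zero]
    split_ifs <;> first | ring1 | omega | (exfalso; omega) | exact ‹False›.elim | grind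
  have h10 : Amat (m + 2) q s 1 0 = -(s * q) := by
    have hv : ((1 : Fin (m + 2)) : ℕ) = 1 := rfl
    simp only [Amat, Pmat, Fin.val_zero, hv]
    split_ifs <;> first | ring1 | omega | (exfalso; omega) | exact ‹False›.elim
  have htail : ∀ i : Fin m, Amat (m + 2) q s i.succ.succ 0 = 0 := by
    intro i
    have hv : ((i.succ.succ : Fin (m + 2)) : ℕ) = (i : ℕ) + 2 := rfl
    simp only [Amat, Pmat, Fin.val_zero, hv]
    split_ifs <;> first | ring1 | omega | (exfalso; omega) | exact ‹False›.elim
  have hv0 : ∀ j : Fin (m+1), ((Fin.succAbove (0 : Fin (m+2)) j : Fin (m+2)) : ℕ) = (j : ℕ) + 1 := by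
    intro j; simp [Fin.zero_succAbove]
  have hm0 : ((Amat (m + 2) q s).submatrix (Fin.succAbove 0) Fin.succ).det = 1 := by
    apply det_lower_one
    · intro j k hjk
      simp only [Matrix.submatrix_apply, Amat, Pmat, hv0 j, Fin.val_succ]
      split_ifs <;> first | ring1 | omega | (exfalso; omega) | exact ‹False›.elim
    · intro j
      simp only [Matrix.submatrix_apply, Amat, Pmat, hv0 j, Fin.val_succ]
      split_ifs <;> first | ring1 | omega | (exfalso; omega) | exact ‹False›.elim
  have hsa : ∀ j : Fin (m+1), (((1 : Fin (m+2)).succAbove j : Fin (m+2)) : ℕ)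
      = if (j : ℕ) = 0 then 0 else (j : ℕ) + 1 := by
    intro j
    have h1 : ((1 : Fin (m + 2)) : ℕ) = 1 := rfl
    have hc : ((j.castSucc : Fin (m + 2)) : ℕ) = (j : ℕ) := rfl
    have hs : ((j.succ : Fin (m + 2)) : ℕ) = (j : ℕ) + 1 := rfl
    simp only [Fin.succAbove, Fin.lt_def, h1]
    split_ifs <;> omega
  have hm1 : (Amat (m + 2) q s).submatrix (Fin.succAbove 1) Fin.succ = Amat' (m + 1) q s := by
    funext j k
    simp only [Matrix.submatrix_apply, Amat', Amat, Pmat, hsa j, Fin.val_succ]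
    split_ifs <;> first | ring1 | omega | (exfalso; omega) | exact ‹False›.elim
  have hexp := Matrix.det_succ_column_zero (Amat (m + 2) q s)
  rw [hexp, Fin.sum_univ_succ, Fin.sum_univ_succ]
  simp only [Fin.succ_zero_eq_one, h00, h10, htail, hm0, hm1, mul_zero, zero_mul,
    mul_one, Finset.sum_const_zero, add_zero, Fin.val_zero, Fin.val_one, pow_zero,
    pow_one, one_mul]
  ring

lemma det_Amat_formula (m : ℕ) (q s : ℂ) :
    (1 - q * s) * (Amat (m + 1) q s).det = (1 - s) * (1 - (q * s) ^ (m + 1)) := by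
  induction m with
  | zero =>
    rw [Matrix.det_fin_one]
    simp only [Amat, Pmat, Fin.val_zero]
    split_ifs <;> first | ring1 | omega | (exfalso; omega) | exact ‹False›.elim
  | succ m ih =>
    rw [det_Amat_rec, det_Amat'_eq]
    linear_combination q * s * ih

noncomputable def Qmat (n : ℕ) (q : ℂ) (m : ℕ) : Matrix (Fin n) (Fin n) ℂ := fun j k =>
  if (j : ℕ) = 0 then (if (k : ℕ) < m then 1 - q else if (k : ℕ) = m then 1 else 0)
  else if (j : ℕ) ≤ m then (if (k : ℕ) + 1 = (j : ℕ) then q else 0)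
  else (if (j : ℕ) = (k : ℕ) then 1 else 0)

lemma sum_two {n : ℕ} (f : Fin n → ℂ) (a b : Fin n) (hab : a ≠ b)
    (h0 : ∀ x, x ≠ a → x ≠ b → f x = 0) : ∑ x, f x = f a + f b := by
  classical
  have hsub : ({a, b} : Finset (Fin n)) ⊆ Finset.univ := Finset.subset_univ _
  rw [← Finset.sum_subset hsub (by
    intro x _ hx
    simp only [Finset.mem_insert, Finset.mem_singleton] at hx
    push_neg at hx
    exact h0 x hx.1 hx.2)]
  exact Finset.sum_pair hab

lemma Qmat_zero (n : ℕ) (q : ℂ) : Qmat n q 0 = 1 := by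
  funext j k
  simp only [Qmat, Matrix.one_apply]
  have h1 : ((j : ℕ) = (k : ℕ)) = (j = k) := by simp [Fin.ext_iff]
  split_ifs <;> first | rfl | omega | exact ‹False›.elim | simp_all [Fin.ext_iff]

lemma Qmat_step (n : ℕ) (q : ℂ) (i : Fin (n - 1)) (m : ℕ) (him : (i : ℕ) = m) :
    Qmat n q m * burauMatrix n q i = Qmat n q (m + 1) := by
  have hm : m < n - 1 := him ▸ i.isLt
  have ham : m < n := by omega
  have hbm : m + 1 < n := by omega
  set a : Fin n := ⟨m, ham⟩ with hadef
  set b : Fin n := ⟨m + 1, hbm⟩ with hbdef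
  have ha : (a : ℕ) = m := rfl
  have hb : (b : ℕ) = m + 1 := rfl
  funext j k
  rw [Matrix.mul_apply]
  have hjlt := j.isLt
  have hklt := k.isLt
  by_cases hk1 : (k : ℕ) = m
  · have hz : ∀ x : Fin n, x ≠ a → x ≠ b →
        Qmat n q m j x * burauMatrix n q i x k = 0 := by
      intro x hxa hxb
      have hxa' : (x : ℕ) ≠ m := fun h => hxa (Fin.ext (by rw [h, ha]))
      have hxb' : (x : ℕ) ≠ m + 1 := fun h => hxb (Fin.ext (by rw [h, hb]))
      have hB : burauMatrix n q i x k = 0 := by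
        simp only [burauMatrix, him]
        rw [if_neg (by tauto), if_neg (by tauto), if_neg (by tauto), if_neg (by tauto),
          if_neg (fun h => hxa' (by rw [h]; exact hk1))]
      rw [hB, mul_zero]
    rw [sum_two _ a b (by simp [hadef, hbdef, Fin.ext_iff]) hz]
    have hBa : burauMatrix n q i a k = 1 - q := by
      simp only [burauMatrix, him, ha, hk1]
      rw [if_pos (by simp)]
    have hBb : burauMatrix n q i b k = q := by
      simp only [burauMatrix, him, hb, hk1]
      rw [if_neg (by omega), if_neg (by omega), if_pos (by simp)]
    rw [hBa, hBb]
    simp only [Qmat, ha, hb, hk1]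
    split_ifs <;> first | ring1 | omega | (exfalso; omega) | exact ‹False›.elim
  · by_cases hk2 : (k : ℕ) = m + 1
    · have hz : ∀ x : Fin n, x ≠ a → Qmat n q m j x * burauMatrix n q i x k = 0 := by
        intro x hxa
        have hxa' : (x : ℕ) ≠ m := fun h => hxa (Fin.ext (by rw [h, ha]))
        have hB : burauMatrix n q i x k = 0 := by
          simp only [burauMatrix, him]
          by_cases hx4 : (x : ℕ) = m + 1
          · rw [if_neg (by omega), if_neg (by tauto), if_neg (by omega), if_pos ⟨hx4, hk2⟩]
          · rw [if_neg (by omega), if_neg (by tauto), if_neg (by omega), if_neg (by tauto),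
              if_neg (fun h => hx4 (by rw [h]; exact hk2))]
        rw [hB, mul_zero]
      rw [Fintype.sum_eq_single a hz]
      have hBa : burauMatrix n q i a k = 1 := by
        simp only [burauMatrix, him, ha, hk2]
        rw [if_neg (by omega), if_pos (by simp)]
      rw [hBa, mul_one]
      simp only [Qmat, ha, hk2]
      split_ifs <;> first | ring1 | omega | (exfalso; omega) | exact ‹False›.elim
    · have hz : ∀ x : Fin n, x ≠ k → Qmat n q m j x * burauMatrix n q i x k = 0 := by
        intro x hxk
        have hB : burauMatrix n q i x k = 0 := by
          simp only [burauMatrix, him]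
          rw [if_neg (by omega), if_neg (by omega), if_neg (by omega), if_neg (by omega),
            if_neg hxk]
        rw [hB, mul_zero]
      rw [Fintype.sum_eq_single k hz]
      have hBk : burauMatrix n q i k k = 1 := by
        simp only [burauMatrix, him]
        rw [if_neg (by omega), if_neg (by omega), if_neg (by omega), if_neg (by omega),
          if_pos (by simp)]
      rw [hBk, mul_one]
      simp only [Qmat]
      split_ifs <;> first | ring1 | omega | (exfalso; omega) | exact ‹False›.elim

lemma prod_take_eq (n : ℕ) (q : ℂ) (m : ℕ) (hm : m ≤ n - 1) :
    (((List.finRange (n - 1)).take m).map (burauMatrix n q)).prod = Qmat n q m := by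
  induction m with
  | zero => simp [Qmat_zero]
  | succ m ih =>
    have hm' : m < n - 1 := by omega
    have hlen : m < (List.finRange (n - 1)).length := by simpa using hm'
    rw [List.take_succ, List.getElem?_eq_getElem hlen]
    simp only [Option.toList_some]
    rw [List.map_append, List.prod_append, ih (by omega), List.map_singleton,
      List.prod_singleton]
    apply Qmat_step
    simp

lemma burauProd_eq_Qmat (n : ℕ) (q : ℂ) : burauProd n q = Qmat n q (n - 1) := by
  rw [burauProd]
  have h := prod_take_eq n q (n - 1) le_rfl
  rwa [List.take_of_length_le (by simp)] at h

lemma Qmat_eq_Pmat (n : ℕ) (q : ℂ) : Qmat n q (n - 1) = Pmat n q := by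
  funext j k
  have hj := j.isLt
  have hk := k.isLt
  simp only [Qmat, Pmat]
  split_ifs <;> first | ring1 | omega | (exfalso; omega) | exact ‹False›.elim


/-- **Characteristic polynomial of `β_{n,q}(σ_1⋯σ_{n−1})`.**
`(1 − qs)·det(I_n − s·B_1⋯B_{n−1}) = (1 − s)(1 − (qs)^n)`; in particular the
eigenvalues of the Burau matrix of `σ_1⋯σ_{n−1}` are `1, qξ_n, …, qξ_n^{n−1}`. -/
theorem burau_full_twist_charpoly (n : ℕ) (hn : 2 ≤ n) (q : ℂ) (hq : q ≠ 0) (s : ℂ) :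
    (1 - q * s) * ((1 : Matrix (Fin n) (Fin n) ℂ) - s • burauProd n q).det
      = (1 - s) * (1 - (q * s) ^ n) := by
  obtain ⟨r, rfl⟩ : ∃ r, n = r + 2 := ⟨n - 2, by omega⟩
  have hM : (1 : Matrix (Fin (r + 2)) (Fin (r + 2)) ℂ) - s • burauProd (r + 2) q
      = Amat (r + 2) q s := by
    rw [burauProd_eq_Qmat, Qmat_eq_Pmat]
    funext x y
    simp only [Matrix.sub_apply, Matrix.one_apply, Matrix.smul_apply, smul_eq_mul, Amat]
    congr 1
    simp [Fin.ext_iff]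
  rw [hM]
  exact det_Amat_formula (r + 1) q s
end

section
/- Let n ≥ 2 and m ∈ ℤ with gcd(n, |m|) = 1. Then for every q ∈ ℂ with q ≠ 0 and every integer j ≥ 1: if n does not divide j then tr(T_{n,m}^j) = 1 − q^{mj}, and if n divides j then tr(T_{n,m}^j) = 1 + (n−1)·q^{mj}. -/
open Matrix

/-- The torus type braid matrix `T_{n,m} = (B_1 ⋯ B_{n−1})^m`. -/
noncomputable def torusBurau (n : ℕ) (q : ℂ) (m : ℤ) : Matrix (Fin n) (Fin n) ℂ :=
  burauProd n q ^ m

/-! ### Auxiliary development -/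

set_option linter.unreachableTactic false
set_option linter.unusedTactic false

lemma TB.sum_ite_coe {n : ℕ} (k : ℕ) (hk : k < n) (f : Fin n → ℂ) :
    (∑ c : Fin n, if (c : ℕ) = k then f c else 0) = f ⟨k, hk⟩ := by
  have h : ∀ c : Fin n, ((c : ℕ) = k) ↔ (c = ⟨k, hk⟩) := fun c => by
    simp [Fin.ext_iff]
  simp only [h]
  simp [Finset.sum_ite_eq' Finset.univ (⟨k, hk⟩ : Fin n) f]

open TB

/-- Explicit form of `B_1 ⋯ B_{n-1}`. -/
noncomputable def Pm (n : ℕ) (q : ℂ) : Matrix (Fin n) (Fin n) ℂ := fun a b =>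
  if (a : ℕ) = 0 then (if (b : ℕ) = n - 1 then 1 else 1 - q)
  else if (b : ℕ) + 1 = (a : ℕ) then q else 0

/-- Explicit inverse of `Pm`. -/
noncomputable def Pm' (n : ℕ) (q : ℂ) : Matrix (Fin n) (Fin n) ℂ := fun a b =>
  if (a : ℕ) = n - 1 then (if (b : ℕ) = 0 then 1 else 1 - q⁻¹)
  else if (a : ℕ) + 1 = (b : ℕ) then q⁻¹ else 0

/-- The flip permutation matrix. -/
noncomputable def Jm (n : ℕ) : Matrix (Fin n) (Fin n) ℂ := fun a b =>
  if (a : ℕ) + (b : ℕ) = n - 1 then 1 else 0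

/-- Partial products of the Burau matrices. -/
noncomputable def Qm (n : ℕ) (q : ℂ) (k : ℕ) : Matrix (Fin n) (Fin n) ℂ := fun a b =>
  if (a : ℕ) = 0 then (if (b : ℕ) < k then 1 - q else if (b : ℕ) = k then 1 else 0)
  else if (a : ℕ) ≤ k then (if (b : ℕ) + 1 = (a : ℕ) then q else 0)
  else if (a : ℕ) = (b : ℕ) then 1 else 0

lemma burau_decomp (n : ℕ) (q : ℂ) (i : Fin (n - 1)) (c b : Fin n) :
    burauMatrix n q i c b =
      (if c = b then 1 else 0)
      + (if (c : ℕ) = (i : ℕ) then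
          (if (b : ℕ) = (i : ℕ) then -q else if (b : ℕ) = (i : ℕ) + 1 then 1 else 0) else 0)
      + (if (c : ℕ) = (i : ℕ) + 1 then
          (if (b : ℕ) = (i : ℕ) then q else if (b : ℕ) = (i : ℕ) + 1 then -1 else 0) else 0) := by
  simp only [burauMatrix, Fin.ext_iff]
  split_ifs <;> first | ring1 | (exfalso; omega)

lemma Qm_zero (n : ℕ) (q : ℂ) : Qm n q 0 = 1 := by
  ext a b
  simp only [Qm, Matrix.one_apply, Fin.ext_iff]
  split_ifs <;> first | ring1 | (exfalso; omega)

lemma Qm_step (n : ℕ) (q : ℂ) (i : Fin (n - 1)) :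
    Qm n q i * burauMatrix n q i = Qm n q ((i : ℕ) + 1) := by
  have hi : (i : ℕ) < n - 1 := i.isLt
  have hi1 : (i : ℕ) < n := by omega
  have hi2 : (i : ℕ) + 1 < n := by omega
  ext a b
  rw [Matrix.mul_apply]
  simp only [burau_decomp, mul_add]
  rw [Finset.sum_add_distrib, Finset.sum_add_distrib]
  have e1 : (∑ c : Fin n, Qm n q (i : ℕ) a c * if c = b then 1 else 0) = Qm n q (i : ℕ) a b := by
    simp [Finset.sum_ite_eq' Finset.univ b (fun c => Qm n q (i : ℕ) a c), mul_ite]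
  have e2 : (∑ c : Fin n, Qm n q (i : ℕ) a c *
      if (c : ℕ) = (i : ℕ) then
        (if (b : ℕ) = (i : ℕ) then -q else if (b : ℕ) = (i : ℕ) + 1 then 1 else 0) else 0)
      = Qm n q (i : ℕ) a ⟨i, hi1⟩ *
        (if (b : ℕ) = (i : ℕ) then -q else if (b : ℕ) = (i : ℕ) + 1 then 1 else 0) := by
    rw [← sum_ite_coe (i : ℕ) hi1
      (fun c => Qm n q (i : ℕ) a c *
        (if (b : ℕ) = (i : ℕ) then -q else if (b : ℕ) = (i : ℕ) + 1 then 1 else 0))]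
    congr 1; ext c; split_ifs <;> simp
  have e3 : (∑ c : Fin n, Qm n q (i : ℕ) a c *
      if (c : ℕ) = (i : ℕ) + 1 then
        (if (b : ℕ) = (i : ℕ) then q else if (b : ℕ) = (i : ℕ) + 1 then -1 else 0) else 0)
      = Qm n q (i : ℕ) a ⟨(i : ℕ) + 1, hi2⟩ *
        (if (b : ℕ) = (i : ℕ) then q else if (b : ℕ) = (i : ℕ) + 1 then -1 else 0) := by
    rw [← sum_ite_coe ((i : ℕ) + 1) hi2
      (fun c => Qm n q (i : ℕ) a c *
        (if (b : ℕ) = (i : ℕ) then q else if (b : ℕ) = (i : ℕ) + 1 then -1 else 0))]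
    congr 1; ext c; split_ifs <;> simp
  rw [e1, e2, e3]
  have hb := b.isLt
  have ha := a.isLt
  simp only [Qm]
  split_ifs <;> first | ring1 | (exfalso; omega)

lemma burauProd_eq (n : ℕ) (q : ℂ) : burauProd n q = Qm n q (n - 1) := by
  set L := (List.finRange (n - 1)).map (burauMatrix n q) with hL
  have hlen : L.length = n - 1 := by simp [hL]
  have key : ∀ k, k ≤ n - 1 → (L.take k).prod = Qm n q k := by
    intro k
    induction k with
    | zero => intro _; simpa using (Qm_zero n q).symm
    | succ k ih =>
      intro hk
      have hk' : k < L.length := by omega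
      rw [List.prod_take_succ L k hk', ih (by omega)]
      have hget : L[k] = burauMatrix n q ⟨k, by omega⟩ := by
        simp only [hL]
        rw [List.getElem_map, List.getElem_finRange]
        rfl
      rw [hget]
      have := Qm_step n q ⟨k, by omega⟩
      simpa using this
  have : L.prod = (L.take (n-1)).prod := by rw [List.take_of_length_le (by omega)]
  rw [burauProd, ← hL, this, key (n-1) le_rfl]

lemma burauProd_eq_Pm (n : ℕ) (hn : 0 < n) (q : ℂ) : burauProd n q = Pm n q := by
  rw [burauProd_eq]
  ext a b
  have ha := a.isLt
  have hb := b.isLt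
  simp only [Qm, Pm]
  split_ifs <;> first | ring1 | (exfalso; omega)

noncomputable def Gg (n : ℕ) (q : ℂ) (j a : ℕ) : ℂ :=
  ∑ k ∈ Finset.range j, if a = k % n then q ^ k else 0

noncomputable def Fm (n : ℕ) (q : ℂ) (j : ℕ) : Matrix (Fin n) (Fin n) ℂ := fun a b =>
  q ^ j * (if ((b : ℕ) + j) % n = (a : ℕ) then 1 else 0) + (1 - q) * Gg n q j (a : ℕ)

lemma Fm_zero (n : ℕ) (q : ℂ) : Fm n q 0 = 1 := by
  ext a b
  have hb := b.isLt
  simp only [Fm, Gg, Finset.range_zero, Finset.sum_empty, pow_zero, one_mul, mul_zero,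
    add_zero, Matrix.one_apply, Fin.ext_iff, Nat.add_zero, Nat.mod_eq_of_lt hb]
  split_ifs <;> first | ring1 | (exfalso; omega)

lemma Pm_decomp (n : ℕ) (q : ℂ) (c b : Fin n) :
    Pm n q c b = (if (c : ℕ) = 0 then (if (b : ℕ) = n - 1 then 1 else 1 - q) else 0)
      + (if (c : ℕ) = (b : ℕ) + 1 then q else 0) := by
  simp only [Pm]
  split_ifs <;> first | ring1 | (exfalso; omega)

lemma Fm_succ (n : ℕ) (hn : 0 < n) (q : ℂ) (j : ℕ) :
    Fm n q j * Pm n q = Fm n q (j + 1) := by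
  ext a b
  rw [Matrix.mul_apply]
  simp only [Pm_decomp, mul_add]
  rw [Finset.sum_add_distrib]
  have e1 : (∑ c : Fin n, Fm n q j a c *
      if (c : ℕ) = 0 then (if (b : ℕ) = n - 1 then 1 else 1 - q) else 0)
      = Fm n q j a ⟨0, hn⟩ * (if (b : ℕ) = n - 1 then 1 else 1 - q) := by
    rw [← sum_ite_coe 0 hn (fun c => Fm n q j a c * (if (b : ℕ) = n - 1 then 1 else 1 - q))]
    congr 1; ext c; split_ifs <;> simp
  rw [e1]
  have hb := b.isLt
  have ha := a.isLt
  rcases Nat.lt_or_ge ((b : ℕ) + 1) n with hb1 | hb1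
  · have e2 : (∑ c : Fin n, Fm n q j a c * if (c : ℕ) = (b : ℕ) + 1 then q else 0)
        = Fm n q j a ⟨(b : ℕ) + 1, hb1⟩ * q := by
      rw [← sum_ite_coe ((b : ℕ) + 1) hb1 (fun c => Fm n q j a c * q)]
      congr 1; ext c; split_ifs <;> simp
    rw [e2]
    have hbn : ¬ ((b : ℕ) = n - 1) := by omega
    rw [if_neg hbn]
    simp only [Fm, Gg, Fin.val_mk]
    rw [Finset.sum_range_succ]
    have harith : (b : ℕ) + (j + 1) = (b : ℕ) + 1 + j := by omega
    rw [harith, Nat.zero_add]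
    split_ifs <;> first | ring1 | (exfalso; omega)
  · have hbn : (b : ℕ) = n - 1 := by omega
    have e2 : (∑ c : Fin n, Fm n q j a c * if (c : ℕ) = (b : ℕ) + 1 then q else 0) = 0 := by
      apply Finset.sum_eq_zero
      intro c _
      rw [if_neg (by have := c.isLt; omega), mul_zero]
    rw [e2, if_pos hbn]
    simp only [Fm, Gg, Fin.val_mk]
    rw [Finset.sum_range_succ]
    have harith : (b : ℕ) + (j + 1) = n + j := by omega
    rw [harith, Nat.add_mod_left, Nat.zero_add]
    split_ifs <;> first | ring1 | (exfalso; omega)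

lemma Pm_pow (n : ℕ) (hn : 0 < n) (q : ℂ) (j : ℕ) : Pm n q ^ j = Fm n q j := by
  induction j with
  | zero => simpa using (Fm_zero n q).symm
  | succ j ih => rw [pow_succ, ih, Fm_succ n hn q j]

lemma trace_Pm_pow (n : ℕ) (hn : 0 < n) (q : ℂ) (j : ℕ) :
    (Pm n q ^ j).trace = (1 - q ^ j) + (if n ∣ j then (n : ℂ) * q ^ j else 0) := by
  rw [Pm_pow n hn q j, Matrix.trace]
  simp only [Matrix.diag, Fm]
  rw [Finset.sum_add_distrib]
  have key : ∀ a : Fin n, (((a : ℕ) + j) % n = (a : ℕ)) ↔ (n ∣ j) := by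
    intro a
    have ha := a.isLt
    rw [Nat.dvd_iff_mod_eq_zero, Nat.add_mod, Nat.mod_eq_of_lt ha]
    have hr : j % n < n := Nat.mod_lt _ hn
    rcases Nat.lt_or_ge ((a : ℕ) + j % n) n with h | h
    · rw [Nat.mod_eq_of_lt h]
      omega
    · have h2 : ((a : ℕ) + j % n) % n = (a : ℕ) + j % n - n := by
        rw [Nat.mod_eq_sub_mod h]
        exact Nat.mod_eq_of_lt (by omega)
      rw [h2]
      omega
  have s1 : (∑ a : Fin n, q ^ j * if ((a : ℕ) + j) % n = (a : ℕ) then (1:ℂ) else 0)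
      = if n ∣ j then (n : ℂ) * q ^ j else 0 := by
    simp only [key]
    rw [← Finset.mul_sum]
    split_ifs with h
    · simp [Finset.sum_const, Finset.card_univ]; ring
    · simp
  have s2 : (∑ a : Fin n, (1 - q) * Gg n q j (a : ℕ)) = 1 - q ^ j := by
    rw [← Finset.mul_sum]
    have : (∑ a : Fin n, Gg n q j (a : ℕ)) = ∑ k ∈ Finset.range j, q ^ k := by
      simp only [Gg]
      rw [Finset.sum_comm]
      apply Finset.sum_congr rfl
      intro k _
      exact sum_ite_coe (k % n) (Nat.mod_lt _ hn) (fun _ => q ^ k)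
    rw [this]
    linear_combination (-1 : ℂ) * geom_sum_mul q j
  rw [s1, s2]
  ring

lemma Pm'_mul_Pm (n : ℕ) (hn : 0 < n) (q : ℂ) (hq : q ≠ 0) : Pm' n q * Pm n q = 1 := by
  ext a b
  rw [Matrix.mul_apply]
  have ha := a.isLt
  have hb := b.isLt
  rcases Nat.lt_or_ge ((a : ℕ) + 1) n with ha1 | ha1
  · have e : (∑ c : Fin n, Pm' n q a c * Pm n q c b)
        = Pm' n q a ⟨(a : ℕ) + 1, ha1⟩ * Pm n q ⟨(a : ℕ) + 1, ha1⟩ b := by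
      rw [← sum_ite_coe ((a : ℕ) + 1) ha1 (fun c => Pm' n q a c * Pm n q c b)]
      apply Finset.sum_congr rfl
      intro c _
      by_cases h : (c : ℕ) = (a : ℕ) + 1
      · rw [if_pos h]
      · rw [if_neg h]
        have : Pm' n q a c = 0 := by
          simp only [Pm']
          rw [if_neg (by omega), if_neg (by omega)]
        rw [this, zero_mul]
    rw [e]
    simp only [Pm', Pm, Fin.val_mk, Matrix.one_apply, Fin.ext_iff]
    split_ifs <;>
      first | (exfalso; omega) | exact (by assumption : False).elim |
        simp [inv_mul_cancel₀ hq] | ring1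
  · have han : (a : ℕ) = n - 1 := by omega
    have hrow : ∀ c : Fin n, Pm' n q a c =
        (if (c : ℕ) = 0 then q⁻¹ else 0) + (1 - q⁻¹) := by
      intro c
      simp only [Pm']
      rw [if_pos han]
      split_ifs <;> first | ring1 | (exfalso; omega)
    simp only [hrow, add_mul]
    rw [Finset.sum_add_distrib]
    have e1 : (∑ c : Fin n, (if (c : ℕ) = 0 then q⁻¹ else 0) * Pm n q c b)
        = q⁻¹ * Pm n q ⟨0, hn⟩ b := by
      rw [← sum_ite_coe 0 hn (fun c => q⁻¹ * Pm n q c b)]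
      apply Finset.sum_congr rfl
      intro c _
      split_ifs <;> simp
    have e2 : (∑ c : Fin n, (1 - q⁻¹) * Pm n q c b) = (1 - q⁻¹) * 1 := by
      rw [← Finset.mul_sum]
      congr 1
      have hdec : ∀ c : Fin n, Pm n q c b =
          (if (c : ℕ) = 0 then (if (b : ℕ) = n - 1 then 1 else 1 - q) else 0)
          + (if (c : ℕ) = (b : ℕ) + 1 then q else 0) := by
        intro c
        simp only [Pm]
        split_ifs <;> first | ring1 | (exfalso; omega)
      simp only [hdec]
      rw [Finset.sum_add_distrib, sum_ite_coe 0 hn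
        (fun _ => (if (b : ℕ) = n - 1 then (1:ℂ) else 1 - q))]
      rcases Nat.lt_or_ge ((b : ℕ) + 1) n with hb1 | hb1
      · rw [sum_ite_coe ((b : ℕ) + 1) hb1 (fun _ => q), if_neg (by omega)]
        ring
      · have : (∑ c : Fin n, if (c : ℕ) = (b : ℕ) + 1 then q else 0) = 0 := by
          apply Finset.sum_eq_zero
          intro c _
          rw [if_neg (by have := c.isLt; omega)]
        rw [this, if_pos (by omega)]
        ring
    rw [e1, e2]
    simp only [Pm, Fin.val_mk, Matrix.one_apply, Fin.ext_iff, if_pos rfl]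
    split_ifs <;>
      first | (exfalso; omega) | exact (by assumption : False).elim |
        ((field_simp; try omega) <;> ring1) | omega

lemma Jm_mul_Jm (n : ℕ) (hn : 0 < n) : Jm n * Jm n = 1 := by
  ext a b
  rw [Matrix.mul_apply]
  have ha := a.isLt
  have hb := b.isLt
  have hcond : ∀ c : Fin n, ((a : ℕ) + (c : ℕ) = n - 1) ↔ ((c : ℕ) = n - 1 - (a : ℕ)) :=
    fun c => by omega
  have hlt : n - 1 - (a : ℕ) < n := by omega
  simp only [Jm, hcond]
  have e : (∑ c : Fin n, (if (c : ℕ) = n - 1 - (a : ℕ) then (1:ℂ) else 0) *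
      (if (c : ℕ) + (b : ℕ) = n - 1 then 1 else 0))
      = (if (n - 1 - (a : ℕ)) + (b : ℕ) = n - 1 then (1:ℂ) else 0) := by
    rw [← sum_ite_coe (n - 1 - (a : ℕ)) hlt
      (fun c => (if (c : ℕ) + (b : ℕ) = n - 1 then (1:ℂ) else 0))]
    apply Finset.sum_congr rfl
    intro c _
    split_ifs <;> simp
  rw [e, Matrix.one_apply]
  simp only [Fin.ext_iff]
  split_ifs <;> first | rfl | (exfalso; omega)

lemma Pm'_conj (n : ℕ) (hn : 0 < n) (q : ℂ) :
    Pm' n q = Jm n * Pm n q⁻¹ * Jm n := by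
  ext a b
  have ha := a.isLt
  have hb := b.isLt
  have hlta : n - 1 - (a : ℕ) < n := by omega
  have hltb : n - 1 - (b : ℕ) < n := by omega
  have e1 : (Jm n * Pm n q⁻¹) a = fun d => Pm n q⁻¹ ⟨n - 1 - (a : ℕ), hlta⟩ d := by
    funext d
    rw [Matrix.mul_apply]
    have hcond : ∀ c : Fin n, ((a : ℕ) + (c : ℕ) = n - 1) ↔ ((c : ℕ) = n - 1 - (a : ℕ)) :=
      fun c => by omega
    simp only [Jm, hcond]
    rw [← sum_ite_coe (n - 1 - (a : ℕ)) hlta (fun c => Pm n q⁻¹ c d)]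
    apply Finset.sum_congr rfl
    intro c _
    split_ifs <;> simp
  rw [Matrix.mul_apply]
  simp only [e1]
  have hcond : ∀ d : Fin n, ((d : ℕ) + (b : ℕ) = n - 1) ↔ ((d : ℕ) = n - 1 - (b : ℕ)) :=
    fun d => by omega
  simp only [Jm, hcond]
  have e2 : (∑ d : Fin n, Pm n q⁻¹ ⟨n - 1 - (a : ℕ), hlta⟩ d *
      (if (d : ℕ) = n - 1 - (b : ℕ) then (1:ℂ) else 0))
      = Pm n q⁻¹ ⟨n - 1 - (a : ℕ), hlta⟩ ⟨n - 1 - (b : ℕ), hltb⟩ := by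
    rw [← sum_ite_coe (n - 1 - (b : ℕ)) hltb
      (fun d => Pm n q⁻¹ ⟨n - 1 - (a : ℕ), hlta⟩ d)]
    apply Finset.sum_congr rfl
    intro d _
    split_ifs <;> simp
  rw [e2]
  simp only [Pm, Pm', Fin.val_mk]
  split_ifs <;> first | ring1 | (exfalso; omega)

lemma Pm'_pow_trace (n : ℕ) (hn : 0 < n) (q : ℂ) (j : ℕ) :
    ((Pm' n q) ^ j).trace = ((Pm n q⁻¹) ^ j).trace := by
  have hconj : ∀ j : ℕ, (Pm' n q) ^ j = Jm n * (Pm n q⁻¹) ^ j * Jm n := by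
    intro j
    induction j with
    | zero => simp [Jm_mul_Jm n hn]
    | succ j ih =>
      rw [pow_succ, ih, Pm'_conj n hn q, pow_succ]
      have := Jm_mul_Jm n hn
      calc Jm n * Pm n q⁻¹ ^ j * Jm n * (Jm n * Pm n q⁻¹ * Jm n)
          = Jm n * Pm n q⁻¹ ^ j * (Jm n * Jm n) * Pm n q⁻¹ * Jm n := by
            simp only [Matrix.mul_assoc]
        _ = Jm n * (Pm n q⁻¹ ^ j * Pm n q⁻¹) * Jm n := by
            rw [this]
            simp only [Matrix.mul_one, Matrix.mul_assoc]
  rw [hconj j, Matrix.trace_mul_cycle, Jm_mul_Jm n hn, Matrix.one_mul]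

/-- **Traces of powers of the torus type braid matrix.** For `gcd(n, |m|) = 1` and `j ≥ 1`:
`tr(T_{n,m}^j) = 1 − q^{mj}` if `n ∤ j`, and `tr(T_{n,m}^j) = 1 + (n−1)q^{mj}` if `n ∣ j`. -/
theorem torus_braid_trace_pow (n : ℕ) (hn : 2 ≤ n) (m : ℤ) (hnm : Nat.Coprime n m.natAbs)
    (q : ℂ) (hq : q ≠ 0) (j : ℕ) (hj : 1 ≤ j) :
    (¬ (n ∣ j) → (torusBurau n q m ^ j).trace = 1 - q ^ (m * j)) ∧
    ((n ∣ j) → (torusBurau n q m ^ j).trace = 1 + ((n : ℂ) - 1) * q ^ (m * j)) := by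
  have hn0 : 0 < n := by omega
  have hP : burauProd n q = Pm n q := burauProd_eq_Pm n hn0 q
  have main : (torusBurau n q m ^ j).trace
      = (1 - q ^ (m * (j : ℤ)))
        + (if n ∣ m.natAbs * j then (n : ℂ) * q ^ (m * (j : ℤ)) else 0) := by
    obtain ⟨k, hk | hk⟩ := Int.eq_nat_or_neg m
    · subst hk
      rw [torusBurau, hP, zpow_natCast, ← pow_mul, trace_Pm_pow n hn0 q (k * j)]
      have hqe : q ^ ((k : ℤ) * (j : ℤ)) = q ^ (k * j) := by
        rw [show ((k : ℤ) * (j : ℤ)) = ((k * j : ℕ) : ℤ) by push_cast; ring, zpow_natCast]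
      rw [hqe, Int.natAbs_natCast]
    · subst hk
      have hPinv : (Pm n q)⁻¹ = Pm' n q :=
        Matrix.inv_eq_left_inv (Pm'_mul_Pm n hn0 q hq)
      rw [torusBurau, hP]
      rw [show ((-(k : ℤ)) : ℤ) = -((k : ℕ) : ℤ) by ring]
      rw [Matrix.zpow_neg_natCast, ← Matrix.inv_pow', hPinv, ← pow_mul,
        Pm'_pow_trace n hn0 q (k * j), trace_Pm_pow n hn0 q⁻¹ (k * j)]
      have hqe : q ^ ((-(k : ℤ)) * (j : ℤ)) = (q⁻¹) ^ (k * j) := by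
        rw [show ((-(k : ℤ)) * (j : ℤ)) = -((k * j : ℕ) : ℤ) by push_cast; ring,
          _root_.zpow_neg, zpow_natCast, inv_pow]
      rw [hqe, Int.natAbs_neg, Int.natAbs_natCast]
  have hdvd : (n ∣ m.natAbs * j) ↔ (n ∣ j) := by
    constructor
    · intro h
      exact Nat.Coprime.dvd_of_dvd_mul_left hnm h
    · intro h
      exact Dvd.dvd.mul_left h _
  constructor
  · intro h
    rw [main, if_neg (by rwa [hdvd]), add_zero]
  · intro h
    rw [main, if_pos (hdvd.mpr h)]
    ring
end
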